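/- arXiv:2006.11174 — 4 statements merged into one kernel-verified Lean document; each statement's English description precedes it below -/
import Mathlib

section
/- Let u : Fin 4 → ℂ and U = Σ_{α=0}^{3} u_α (σ_α ⊗ σ_α). For α < α' in {0,1,2,3} and signs s, t ∈ {+1, −1}, let A_s^{αα'} = (1/2)(σ_α + s·σ_{α'}) and B_t^{αα'} = (1/2)(σ_α + t·i·σ_{α'}). Then for every 4×4 complex matrix ρ: U ρ U† = Σ_α |u_α|² (σ_α⊗σ_α) ρ (σ_α⊗σ_α) + Σ_{α<α'} (u_α·conj(u_{α'}) + u_{α'}·conj(u_α)) · [ Σ_{s,t∈{±1}} s·t·(A_s^{αα'}⊗A_t^{αα'}) ρ (A_s^{αα'}⊗A_t^{αα'})† − Σ_{s,t∈{±1}} s·t·(B_s^{αα'}⊗B_t^{αα'}) ρ (B_s^{αα'}⊗B_t^{αα'})† ] + Σ_{α<α'} i·(u_α·conj(u_{α'}) − u_{α'}·conj(u_α)) · [ Σ_{s,t∈{±1}} s·t·( (A_s^{αα'}⊗B_t^{αα'}) ρ (A_s^{αα'}⊗B_t^{αα'})† + (B_s^{αα'}⊗A_t^{αα'}) ρ (B_s^{αα'}⊗A_t^{αα'})†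 ) ]. -/
open Matrix Kronecker

/-- The Pauli matrices `σ₀, σ₁, σ₂, σ₃` as 2×2 complex matrices. -/
noncomputable def pauli : Fin 4 → Matrix (Fin 2) (Fin 2) ℂ :=
  ![1, !![0, 1; 1, 0], !![0, -Complex.I; Complex.I, 0], !![1, 0; 0, -1]]

/-- `A_s^{αα'} = (σ_α + s σ_{α'})/2` for a sign `s = ±1`. -/
noncomputable def opA (s : ℤ) (α α' : Fin 4) : Matrix (Fin 2) (Fin 2) ℂ :=
  (1 / 2 : ℂ) • (pauli α + (s : ℂ) • pauli α')

/-- `B_t^{αα'} = (σ_α + t i σ_{α'})/2` for a sign `t = ±1`. -/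
noncomputable def opB (t : ℤ) (α α' : Fin 4) : Matrix (Fin 2) (Fin 2) ℂ :=
  (1 / 2 : ℂ) • (pauli α + ((t : ℂ) * Complex.I) • pauli α')

/-- The set of signs `{+1, −1}`. -/
def signs : Finset ℤ := {1, -1}

lemma kronCT (A B : Matrix (Fin 2) (Fin 2) ℂ) : (A ⊗ₖ B)ᴴ = Aᴴ ⊗ₖ Bᴴ := by
  ext ⟨i,j⟩ ⟨k,l⟩
  simp [Matrix.conjTranspose_apply, Matrix.kroneckerMap_apply]

lemma pauliCT : ∀ α : Fin 4, (pauli α)ᴴ = pauli α := by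
  intro α
  fin_cases α <;>
    · ext i j
      fin_cases i <;> fin_cases j <;>
        simp [pauli, Matrix.conjTranspose_apply, Matrix.one_apply]

lemma habs (z : ℂ) : ((‖z‖ : ℂ)) ^ 2 = z * (starRingEnd ℂ) z := by
  calc ((‖z‖ : ℂ)) ^ 2 = ((‖z‖ ^ 2 : ℝ) : ℂ) := by push_cast; ring
    _ = ((Complex.normSq z : ℝ) : ℂ) := by rw [Complex.sq_norm]
    _ = z * (starRingEnd ℂ) z := (Complex.mul_conj z).symm

set_option maxHeartbeats 1000000 in
lemma key (X Y : Matrix (Fin 2) (Fin 2) ℂ) (ρ : Matrix (Fin 2 × Fin 2) (Fin 2 × Fin 2) ℂ)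
    (a b : ℂ) :
    (a + b) •
        ((∑ s ∈ signs, ∑ t ∈ signs, ((s * t : ℤ) : ℂ) •
            ((((1/2:ℂ) • (X + (s:ℂ) • Y)) ⊗ₖ ((1/2:ℂ) • (X + (t:ℂ) • Y))) * ρ *
              (((1/2:ℂ) • (X + (s:ℂ) • Y)) ⊗ₖ ((1/2:ℂ) • (X + (t:ℂ) • Y)))ᴴ))
          - (∑ s ∈ signs, ∑ t ∈ signs, ((s * t : ℤ) : ℂ) •
            ((((1/2:ℂ) • (X + ((s:ℂ) * Complex.I) • Y)) ⊗ₖ ((1/2:ℂ) • (X + ((t:ℂ) * Complex.I) • Y))) * ρ *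
              (((1/2:ℂ) • (X + ((s:ℂ) * Complex.I) • Y)) ⊗ₖ ((1/2:ℂ) • (X + ((t:ℂ) * Complex.I) • Y)))ᴴ)))
      + (Complex.I * (a - b)) •
          (∑ s ∈ signs, ∑ t ∈ signs, ((s * t : ℤ) : ℂ) •
            ((((1/2:ℂ) • (X + (s:ℂ) • Y)) ⊗ₖ ((1/2:ℂ) • (X + ((t:ℂ) * Complex.I) • Y))) * ρ *
                (((1/2:ℂ) • (X + (s:ℂ) • Y)) ⊗ₖ ((1/2:ℂ) • (X + ((t:ℂ) * Complex.I) • Y)))ᴴ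
              + (((1/2:ℂ) • (X + ((s:ℂ) * Complex.I) • Y)) ⊗ₖ ((1/2:ℂ) • (X + (t:ℂ) • Y))) * ρ *
                (((1/2:ℂ) • (X + ((s:ℂ) * Complex.I) • Y)) ⊗ₖ ((1/2:ℂ) • (X + (t:ℂ) • Y)))ᴴ))
    = a • ((X ⊗ₖ X) * ρ * (Y ⊗ₖ Y)ᴴ) + b • ((Y ⊗ₖ Y) * ρ * (X ⊗ₖ X)ᴴ) := by
  simp only [signs, Finset.sum_pair (show (1:ℤ) ≠ -1 by decide)]
  simp only [kronCT, Matrix.conjTranspose_add, Matrix.conjTranspose_smul,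
    Matrix.add_kronecker, Matrix.kronecker_add, Matrix.smul_kronecker, Matrix.kronecker_smul,
    Matrix.add_mul, Matrix.mul_add, Matrix.smul_mul, Matrix.mul_smul,
    smul_smul, smul_add, add_smul, sub_eq_add_neg, neg_smul, smul_neg]
  push_cast
  simp only [Complex.star_def, _root_.map_mul, _root_.map_one, _root_.map_neg, map_div₀,
    map_ofNat, Complex.conj_I, star_one, star_neg, one_smul, neg_neg, neg_one_mul]
  match_scalars <;> first
    | ring1
    | (ring_nf; simp [Complex.I_sq]; try ring_nf)

set_option maxHeartbeats 4000000 in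
theorem stmt5 (u : Fin 4 → ℂ) (ρ : Matrix (Fin 2 × Fin 2) (Fin 2 × Fin 2) ℂ) :
    (∑ α : Fin 4, u α • (pauli α ⊗ₖ pauli α)) * ρ *
        (∑ α : Fin 4, u α • (pauli α ⊗ₖ pauli α))ᴴ
    = (∑ α : Fin 4, ((‖u α‖ : ℂ) ^ 2) •
          ((pauli α ⊗ₖ pauli α) * ρ * (pauli α ⊗ₖ pauli α)))
      + (∑ α : Fin 4, ∑ α' ∈ Finset.univ.filter (fun a => α < a),
          (u α * (starRingEnd ℂ) (u α') + u α' * (starRingEnd ℂ) (u α)) •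
            ((∑ s ∈ signs, ∑ t ∈ signs, ((s * t : ℤ) : ℂ) •
                ((opA s α α' ⊗ₖ opA t α α') * ρ * (opA s α α' ⊗ₖ opA t α α')ᴴ))
              - (∑ s ∈ signs, ∑ t ∈ signs, ((s * t : ℤ) : ℂ) •
                ((opB s α α' ⊗ₖ opB t α α') * ρ * (opB s α α' ⊗ₖ opB t α α')ᴴ))))
      + (∑ α : Fin 4, ∑ α' ∈ Finset.univ.filter (fun a => α < a),
          (Complex.I * (u α * (starRingEnd ℂ) (u α') - u α' * (starRingEnd ℂ) (u α))) •
            (∑ s ∈ signs, ∑ t ∈ signs, ((s * t : ℤ) : ℂ) •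
              ((opA s α α' ⊗ₖ opB t α α') * ρ * (opA s α α' ⊗ₖ opB t α α')ᴴ
                + (opB s α α' ⊗ₖ opA t α α') * ρ * (opB s α α' ⊗ₖ opA t α α')ᴴ))) := by
  have hf0 : (Finset.univ.filter (fun a => (0:Fin 4) < a)) = ({1,2,3} : Finset (Fin 4)) := by decide
  have hf1 : (Finset.univ.filter (fun a => (1:Fin 4) < a)) = ({2,3} : Finset (Fin 4)) := by decide
  have hf2 : (Finset.univ.filter (fun a => (2:Fin 4) < a)) = ({3} : Finset (Fin 4)) := by decide
  have hf3 : (Finset.univ.filter (fun a => (3:Fin 4) < a)) = (∅ : Finset (Fin 4)) := by decide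
  have sum3 : ∀ (f : Fin 4 → Matrix (Fin 2 × Fin 2) (Fin 2 × Fin 2) ℂ),
      ∑ x ∈ ({1,2,3} : Finset (Fin 4)), f x = f 1 + f 2 + f 3 := by
    intro f
    rw [Finset.sum_insert (by decide), Finset.sum_insert (by decide), Finset.sum_singleton,
      add_assoc]
  have sum2 : ∀ (f : Fin 4 → Matrix (Fin 2 × Fin 2) (Fin 2 × Fin 2) ℂ),
      ∑ x ∈ ({2,3} : Finset (Fin 4)), f x = f 2 + f 3 := by
    intro f
    rw [Finset.sum_insert (by decide), Finset.sum_singleton]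
  simp only [opA, opB, Fin.sum_univ_four, hf0, hf1, hf2, hf3, sum3, sum2,
    Finset.sum_singleton, Finset.sum_empty]
  have k01 := eq_sub_of_add_eq (key (pauli 0) (pauli 1) ρ
    (u 0 * (starRingEnd ℂ) (u 1)) (u 1 * (starRingEnd ℂ) (u 0)))
  have k02 := eq_sub_of_add_eq (key (pauli 0) (pauli 2) ρ
    (u 0 * (starRingEnd ℂ) (u 2)) (u 2 * (starRingEnd ℂ) (u 0)))
  have k03 := eq_sub_of_add_eq (key (pauli 0) (pauli 3) ρ
    (u 0 * (starRingEnd ℂ) (u 3)) (u 3 * (starRingEnd ℂ) (u 0)))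
  have k12 := eq_sub_of_add_eq (key (pauli 1) (pauli 2) ρ
    (u 1 * (starRingEnd ℂ) (u 2)) (u 2 * (starRingEnd ℂ) (u 1)))
  have k13 := eq_sub_of_add_eq (key (pauli 1) (pauli 3) ρ
    (u 1 * (starRingEnd ℂ) (u 3)) (u 3 * (starRingEnd ℂ) (u 1)))
  have k23 := eq_sub_of_add_eq (key (pauli 2) (pauli 3) ρ
    (u 2 * (starRingEnd ℂ) (u 3)) (u 3 * (starRingEnd ℂ) (u 2)))
  rw [k01, k02, k03, k12, k13, k23]
  simp only [Matrix.conjTranspose_add, Matrix.conjTranspose_smul, kronCT, pauliCT,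
    Matrix.add_mul, Matrix.mul_add, Matrix.smul_mul, Matrix.mul_smul, smul_smul, habs,
    Complex.star_def]
  match_scalars <;> ring1
end

section
/- For real numbers θ₁, θ₂, θ₃, write c_k = cos θ_k and s_k = sin θ_k. Then the matrix exponential satisfies exp(i·(θ₁ σ₁⊗σ₁ + θ₂ σ₂⊗σ₂ + θ₃ σ₃⊗σ₃)) = u₀ (σ₀⊗σ₀) + u₁ (σ₁⊗σ₁) + u₂ (σ₂⊗σ₂) + u₃ (σ₃⊗σ₃), where u₀ = c₁c₂c₃ + i·s₁s₂s₃, u₁ = c₁s₂s₃ + i·s₁c₂c₃, u₂ = s₁c₂s₃ + i·c₁s₂c₃, and u₃ = s₁s₂c₃ + i·c₁c₂s₃. -/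
open Matrix Kronecker

open NormedSpace in
lemma exp_invol (A : Matrix (Fin 2 × Fin 2) (Fin 2 × Fin 2) ℂ) (h : A * A = 1) (θ : ℝ) :
    exp ((Complex.I * θ) • A)
      = (Real.cos θ : ℂ) • (1 : Matrix (Fin 2 × Fin 2) (Fin 2 × Fin 2) ℂ)
        + (Complex.I * Real.sin θ) • A := by
  letI : SeminormedRing (Matrix (Fin 2 × Fin 2) (Fin 2 × Fin 2) ℂ) :=
    Matrix.linftyOpSemiNormedRing
  letI : NormedRing (Matrix (Fin 2 × Fin 2) (Fin 2 × Fin 2) ℂ) := Matrix.linftyOpNormedRing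
  letI : NormedAlgebra ℂ (Matrix (Fin 2 × Fin 2) (Fin 2 × Fin 2) ℂ) :=
    Matrix.linftyOpNormedAlgebra
  rw [exp_eq_tsum (𝕂 := ℂ), Complex.ofReal_cos, Complex.ofReal_sin]
  refine HasSum.tsum_eq (HasSum.even_add_odd ?_ ?_)
  · have hc := (Complex.hasSum_cos (θ : ℂ)).smul_const
      (1 : Matrix (Fin 2 × Fin 2) (Fin 2 × Fin 2) ℂ)
    convert hc using 2 with k
    case e'_3 => rfl
    rw [smul_pow, pow_mul A, pow_two A, h, one_pow, smul_smul]
    congr 1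
    rw [mul_pow, pow_mul Complex.I, Complex.I_sq]
    field_simp
    try ring
  · have hs := ((Complex.hasSum_sin (θ : ℂ)).mul_left Complex.I).smul_const A
    convert hs using 2 with k
    case e'_3 => rfl
    rw [smul_pow, pow_succ A, pow_mul A, pow_two A, h, one_pow, one_mul, smul_smul]
    congr 1
    rw [pow_succ, mul_pow, pow_mul Complex.I, Complex.I_sq]
    field_simp
    try ring

open NormedSpace in
lemma key_s6 (A₁ A₂ A₃ : Matrix (Fin 2 × Fin 2) (Fin 2 × Fin 2) ℂ)
    (h1 : A₁ * A₁ = 1) (h2 : A₂ * A₂ = 1) (h3 : A₃ * A₃ = 1)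
    (h12 : A₁ * A₂ = -A₃) (h21 : A₂ * A₁ = -A₃)
    (h23 : A₂ * A₃ = -A₁) (h32 : A₃ * A₂ = -A₁)
    (h13 : A₁ * A₃ = -A₂) (h31 : A₃ * A₁ = -A₂) (θ₁ θ₂ θ₃ : ℝ) :
    exp (Complex.I • ((θ₁ : ℂ) • A₁ + (θ₂ : ℂ) • A₂ + (θ₃ : ℂ) • A₃))
    = ((Real.cos θ₁ * Real.cos θ₂ * Real.cos θ₃ : ℂ)
          + Complex.I * (Real.sin θ₁ * Real.sin θ₂ * Real.sin θ₃ : ℂ)) • 1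
      + ((Real.cos θ₁ * Real.sin θ₂ * Real.sin θ₃ : ℂ)
          + Complex.I * (Real.sin θ₁ * Real.cos θ₂ * Real.cos θ₃ : ℂ)) • A₁
      + ((Real.sin θ₁ * Real.cos θ₂ * Real.sin θ₃ : ℂ)
          + Complex.I * (Real.cos θ₁ * Real.sin θ₂ * Real.cos θ₃ : ℂ)) • A₂
      + ((Real.sin θ₁ * Real.sin θ₂ * Real.cos θ₃ : ℂ)
          + Complex.I * (Real.cos θ₁ * Real.cos θ₂ * Real.sin θ₃ : ℂ)) • A₃ := by
  have c12 : Commute A₁ A₂ := by unfold Commute SemiconjBy; rw [h12, h21]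
  have c13 : Commute A₁ A₃ := by unfold Commute SemiconjBy; rw [h13, h31]
  have c23 : Commute A₂ A₃ := by unfold Commute SemiconjBy; rw [h23, h32]
  have e1 : Complex.I • ((θ₁ : ℂ) • A₁ + (θ₂ : ℂ) • A₂ + (θ₃ : ℂ) • A₃)
      = ((Complex.I * θ₁) • A₁ + (Complex.I * θ₂) • A₂) + (Complex.I * θ₃) • A₃ := by
    module
  rw [e1, Matrix.exp_add_of_commute, Matrix.exp_add_of_commute]
  · rw [exp_invol A₁ h1, exp_invol A₂ h2, exp_invol A₃ h3]
    simp only [Matrix.add_mul, Matrix.mul_add, Matrix.smul_mul, Matrix.mul_smul,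
      Matrix.one_mul, Matrix.mul_one, Matrix.neg_mul, Matrix.mul_neg, neg_smul,
      h12, h21, h23, h32, h13, h31, h1, h2, h3, smul_neg, smul_smul]
    have hI3 : Complex.I ^ 3 = -Complex.I := by
      rw [(by norm_num : 3 = 2 + 1), pow_add, Complex.I_sq]; ring
    match_scalars <;> ring_nf <;> simp only [hI3, Complex.I_sq] <;> ring
  · exact (c12.smul_left _).smul_right _
  · exact ((c13.smul_left _).smul_right _).add_left ((c23.smul_left _).smul_right _)

theorem stmt6 (θ₁ θ₂ θ₃ : ℝ) :
    NormedSpace.exp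
        (Complex.I • ((θ₁ : ℂ) • (pauli 1 ⊗ₖ pauli 1) + (θ₂ : ℂ) • (pauli 2 ⊗ₖ pauli 2)
          + (θ₃ : ℂ) • (pauli 3 ⊗ₖ pauli 3)))
    = ((Real.cos θ₁ * Real.cos θ₂ * Real.cos θ₃ : ℂ)
          + Complex.I * (Real.sin θ₁ * Real.sin θ₂ * Real.sin θ₃ : ℂ)) •
        (pauli 0 ⊗ₖ pauli 0)
      + ((Real.cos θ₁ * Real.sin θ₂ * Real.sin θ₃ : ℂ)
          + Complex.I * (Real.sin θ₁ * Real.cos θ₂ * Real.cos θ₃ : ℂ)) •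
        (pauli 1 ⊗ₖ pauli 1)
      + ((Real.sin θ₁ * Real.cos θ₂ * Real.sin θ₃ : ℂ)
          + Complex.I * (Real.cos θ₁ * Real.sin θ₂ * Real.cos θ₃ : ℂ)) •
        (pauli 2 ⊗ₖ pauli 2)
      + ((Real.sin θ₁ * Real.sin θ₂ * Real.cos θ₃ : ℂ)
          + Complex.I * (Real.cos θ₁ * Real.cos θ₂ * Real.sin θ₃ : ℂ)) •
        (pauli 3 ⊗ₖ pauli 3) := by
  have p0 : pauli 0 ⊗ₖ pauli 0 = (1 : Matrix (Fin 2 × Fin 2) (Fin 2 × Fin 2) ℂ) := by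
    show (1 : Matrix (Fin 2) (Fin 2) ℂ) ⊗ₖ 1 = 1
    exact Matrix.one_kronecker_one
  have m12 : pauli 1 * pauli 2 = Complex.I • pauli 3 := by
    ext i j; fin_cases i <;> fin_cases j <;> simp [pauli, Matrix.mul_apply,
      Fin.sum_univ_two]
  have m21 : pauli 2 * pauli 1 = (-Complex.I) • pauli 3 := by
    ext i j; fin_cases i <;> fin_cases j <;> simp [pauli, Matrix.mul_apply,
      Fin.sum_univ_two]
  have m23 : pauli 2 * pauli 3 = Complex.I • pauli 1 := by
    ext i j; fin_cases i <;> fin_cases j <;> simp [pauli, Matrix.mul_apply,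
      Fin.sum_univ_two]
  have m32 : pauli 3 * pauli 2 = (-Complex.I) • pauli 1 := by
    ext i j; fin_cases i <;> fin_cases j <;> simp [pauli, Matrix.mul_apply,
      Fin.sum_univ_two]
  have m31 : pauli 3 * pauli 1 = Complex.I • pauli 2 := by
    ext i j; fin_cases i <;> fin_cases j <;> simp [pauli, Matrix.mul_apply,
      Fin.sum_univ_two]
  have m13 : pauli 1 * pauli 3 = (-Complex.I) • pauli 2 := by
    ext i j; fin_cases i <;> fin_cases j <;> simp [pauli, Matrix.mul_apply,
      Fin.sum_univ_two]
  have sq1 : pauli 1 * pauli 1 = 1 := by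
    ext i j; fin_cases i <;> fin_cases j <;> simp [pauli, Matrix.mul_apply,
      Fin.sum_univ_two, Matrix.one_apply]
  have sq2 : pauli 2 * pauli 2 = 1 := by
    ext i j; fin_cases i <;> fin_cases j <;> simp [pauli, Matrix.mul_apply,
      Fin.sum_univ_two, Matrix.one_apply]
  have sq3 : pauli 3 * pauli 3 = 1 := by
    ext i j; fin_cases i <;> fin_cases j <;> simp [pauli, Matrix.mul_apply,
      Fin.sum_univ_two, Matrix.one_apply]
  have prod : ∀ (a b : Fin 4), (pauli a ⊗ₖ pauli a) * (pauli b ⊗ₖ pauli b)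
      = (pauli a * pauli b) ⊗ₖ (pauli a * pauli b) := fun a b =>
    (Matrix.mul_kronecker_mul _ _ _ _).symm
  have negI : ∀ (M : Matrix (Fin 2) (Fin 2) ℂ) (c : ℂ),
      (c • M) ⊗ₖ (c • M) = (c * c) • (M ⊗ₖ M) := by
    intro M c
    rw [Matrix.smul_kronecker, Matrix.kronecker_smul, smul_smul]
  rw [p0]
  refine key_s6 _ _ _ ?_ ?_ ?_ ?_ ?_ ?_ ?_ ?_ ?_ θ₁ θ₂ θ₃
  · rw [prod, sq1, Matrix.one_kronecker_one]
  · rw [prod, sq2, Matrix.one_kronecker_one]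
  · rw [prod, sq3, Matrix.one_kronecker_one]
  · rw [prod, m12, negI, Complex.I_mul_I, neg_one_smul]
  · rw [prod, m21, negI]; simp [Complex.I_mul_I]
  · rw [prod, m23, negI, Complex.I_mul_I, neg_one_smul]
  · rw [prod, m32, negI]; simp [Complex.I_mul_I]
  · rw [prod, m13, negI]; simp [Complex.I_mul_I]
  · rw [prod, m31, negI, Complex.I_mul_I, neg_one_smul]
end

section
/- Fix β ∈ {1,2,3} and θ ∈ ℝ, and define u : Fin 4 → ℂ by u₀ = cos θ, u_β = i·sin θ, and u_α = 0 for the remaining two indices (these are the coefficients of the gate exp(iθ σ_β⊗σ_β)). Then W(u) = 1 + 2·|sin(2θ)|; in particular W(u) ≤ 3, with equality when θ = π/4. -/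
/-- The overhead `W(u)` of the decomposition of the two-qubit unitary with
Pauli coefficients `u`. -/
noncomputable def W (u : Fin 4 → ℂ) : ℝ :=
  1 + ∑ α : Fin 4, ∑ α' : Fin 4,
    if α ≠ α' then
      ‖u α * (starRingEnd ℂ) (u α') + u α' * (starRingEnd ℂ) (u α)‖
        + ‖u α * (starRingEnd ℂ) (u α') - u α' * (starRingEnd ℂ) (u α)‖
    else 0


lemma aux (θ : ℝ) :
    ‖(Real.cos θ : ℂ) * (starRingEnd ℂ) (Complex.I * Real.sin θ) +
      Complex.I * Real.sin θ * (starRingEnd ℂ) (Real.cos θ : ℂ)‖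
    + ‖(Real.cos θ : ℂ) * (starRingEnd ℂ) (Complex.I * Real.sin θ) -
      Complex.I * Real.sin θ * (starRingEnd ℂ) (Real.cos θ : ℂ)‖ = |Real.sin (2*θ)| := by
  have h1 : (Real.cos θ : ℂ) * (starRingEnd ℂ) (Complex.I * Real.sin θ) +
      Complex.I * Real.sin θ * (starRingEnd ℂ) (Real.cos θ : ℂ) = 0 := by
    simp only [map_mul, Complex.conj_I, Complex.conj_ofReal]; ring
  have h2 : (Real.cos θ : ℂ) * (starRingEnd ℂ) (Complex.I * Real.sin θ) -
      Complex.I * Real.sin θ * (starRingEnd ℂ) (Real.cos θ : ℂ)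
      = Complex.I * (-(Real.sin (2*θ)) : ℝ) := by
    simp only [map_mul, Complex.conj_I, Complex.conj_ofReal]
    push_cast [Real.sin_two_mul]
    ring
  rw [h1, h2, norm_zero, norm_mul, Complex.norm_I, Complex.norm_real]
  simp

lemma aux2 (θ : ℝ) :
    ‖Complex.I * Real.sin θ * (starRingEnd ℂ) (Real.cos θ : ℂ) +
      (Real.cos θ : ℂ) * (starRingEnd ℂ) (Complex.I * Real.sin θ)‖
    + ‖Complex.I * Real.sin θ * (starRingEnd ℂ) (Real.cos θ : ℂ) -
      (Real.cos θ : ℂ) * (starRingEnd ℂ) (Complex.I * Real.sin θ)‖ = |Real.sin (2*θ)| := by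
  have h1 : Complex.I * Real.sin θ * (starRingEnd ℂ) (Real.cos θ : ℂ) +
      (Real.cos θ : ℂ) * (starRingEnd ℂ) (Complex.I * Real.sin θ) = 0 := by
    simp only [map_mul, Complex.conj_I, Complex.conj_ofReal]; ring
  have h2 : Complex.I * Real.sin θ * (starRingEnd ℂ) (Real.cos θ : ℂ) -
      (Real.cos θ : ℂ) * (starRingEnd ℂ) (Complex.I * Real.sin θ)
      = Complex.I * ((Real.sin (2*θ)) : ℝ) := by
    simp only [map_mul, Complex.conj_I, Complex.conj_ofReal]
    push_cast [Real.sin_two_mul]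
    ring
  rw [h1, h2, norm_zero, norm_mul, Complex.norm_I, Complex.norm_real]
  simp

theorem stmt11 (β : Fin 4) (hβ : β ∈ ({1, 2, 3} : Finset (Fin 4))) (θ : ℝ) (u : Fin 4 → ℂ)
    (h0 : u 0 = (Real.cos θ : ℂ)) (hb : u β = Complex.I * Real.sin θ)
    (hrest : ∀ α : Fin 4, α ≠ 0 → α ≠ β → u α = 0) :
    W u = 1 + 2 * |Real.sin (2 * θ)| ∧ W u ≤ 3 ∧ (θ = Real.pi / 4 → W u = 3) := by
  have key : W u = 1 + 2 * |Real.sin (2 * θ)| := by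
    unfold W
    fin_cases β
    · simp at hβ
    · have hb' : u 1 = Complex.I * Real.sin θ := hb
      have h2 := hrest 2 (by decide) (by decide)
      have h3 := hrest 3 (by decide) (by decide)
      simp [Fin.sum_univ_four, h0, hb', h2, h3, aux, aux2,
        -Complex.ofReal_cos, -Complex.ofReal_sin]
      rw [show (-((Real.cos θ:ℂ) * (Complex.I * (Real.sin θ:ℂ))) + Complex.I * (Real.sin θ:ℂ) * (Real.cos θ:ℂ)) = 0 by ring,
          show (Complex.I * (Real.sin θ:ℂ) * (Real.cos θ:ℂ) + -((Real.cos θ:ℂ) * (Complex.I * (Real.sin θ:ℂ)))) = 0 by ring,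
          show (-((Real.cos θ:ℂ) * (Complex.I * (Real.sin θ:ℂ))) - Complex.I * (Real.sin θ:ℂ) * (Real.cos θ:ℂ)) = Complex.I * ((-(Real.sin (2*θ)) : ℝ) : ℂ) by push_cast [Real.sin_two_mul]; ring,
          show (Complex.I * (Real.sin θ:ℂ) * (Real.cos θ:ℂ) + (Real.cos θ:ℂ) * (Complex.I * (Real.sin θ:ℂ))) = Complex.I * ((Real.sin (2*θ) : ℝ) : ℂ) by push_cast [Real.sin_two_mul]; ring]
      simp [map_mul, Complex.norm_I, Complex.norm_real, -Complex.ofReal_sin, -Complex.ofReal_neg]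
      ring
    · have hb' : u 2 = Complex.I * Real.sin θ := hb
      have h2 := hrest 1 (by decide) (by decide)
      have h3 := hrest 3 (by decide) (by decide)
      simp [Fin.sum_univ_four, h0, hb', h2, h3, aux, aux2,
        -Complex.ofReal_cos, -Complex.ofReal_sin]
      rw [show (-((Real.cos θ:ℂ) * (Complex.I * (Real.sin θ:ℂ))) + Complex.I * (Real.sin θ:ℂ) * (Real.cos θ:ℂ)) = 0 by ring,
          show (Complex.I * (Real.sin θ:ℂ) * (Real.cos θ:ℂ) + -((Real.cos θ:ℂ) * (Complex.I * (Real.sin θ:ℂ)))) = 0 by ring,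
          show (-((Real.cos θ:ℂ) * (Complex.I * (Real.sin θ:ℂ))) - Complex.I * (Real.sin θ:ℂ) * (Real.cos θ:ℂ)) = Complex.I * ((-(Real.sin (2*θ)) : ℝ) : ℂ) by push_cast [Real.sin_two_mul]; ring,
          show (Complex.I * (Real.sin θ:ℂ) * (Real.cos θ:ℂ) + (Real.cos θ:ℂ) * (Complex.I * (Real.sin θ:ℂ))) = Complex.I * ((Real.sin (2*θ) : ℝ) : ℂ) by push_cast [Real.sin_two_mul]; ring]
      simp [map_mul, Complex.norm_I, Complex.norm_real, -Complex.ofReal_sin, -Complex.ofReal_neg]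
      ring
    · have hb' : u 3 = Complex.I * Real.sin θ := hb
      have h2 := hrest 1 (by decide) (by decide)
      have h3 := hrest 2 (by decide) (by decide)
      simp [Fin.sum_univ_four, h0, hb', h2, h3, aux, aux2,
        -Complex.ofReal_cos, -Complex.ofReal_sin]
      rw [show (-((Real.cos θ:ℂ) * (Complex.I * (Real.sin θ:ℂ))) + Complex.I * (Real.sin θ:ℂ) * (Real.cos θ:ℂ)) = 0 by ring,
          show (Complex.I * (Real.sin θ:ℂ) * (Real.cos θ:ℂ) + -((Real.cos θ:ℂ) * (Complex.I * (Real.sin θ:ℂ)))) = 0 by ring,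
          show (-((Real.cos θ:ℂ) * (Complex.I * (Real.sin θ:ℂ))) - Complex.I * (Real.sin θ:ℂ) * (Real.cos θ:ℂ)) = Complex.I * ((-(Real.sin (2*θ)) : ℝ) : ℂ) by push_cast [Real.sin_two_mul]; ring,
          show (Complex.I * (Real.sin θ:ℂ) * (Real.cos θ:ℂ) + (Real.cos θ:ℂ) * (Complex.I * (Real.sin θ:ℂ))) = Complex.I * ((Real.sin (2*θ) : ℝ) : ℂ) by push_cast [Real.sin_two_mul]; ring]
      simp [map_mul, Complex.norm_I, Complex.norm_real, -Complex.ofReal_sin, -Complex.ofReal_neg]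
      ring
  refine ⟨key, ?_, ?_⟩
  · rw [key]
    have := Real.abs_sin_le_one (2 * θ)
    linarith
  · intro h
    rw [key, h]
    rw [show 2 * (Real.pi / 4) = Real.pi / 2 by ring, Real.sin_pi_div_two]
    norm_num
end

section
/- Let u : Fin 4 → ℂ satisfy Σ_{α=0}^{3} |u_α|² = 1. Then (Σ_{α=0}^{3} |u_α|)² ≤ W(u). (That is, the gate-based overhead G = (Σ_α |u_α|)² is never larger than the channel-decomposition overhead W.) -/
lemma aux_abs (z w : ℂ) : ‖z‖ ≤ ‖z + w‖ + ‖z - w‖ := by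
  have h : (2:ℂ) * z = (z + w) + (z - w) := by ring
  have h2 := norm_add_le (z + w) (z - w)
  rw [← h, norm_mul] at h2
  have : ‖(2:ℂ)‖ = 2 := by norm_num [Complex.norm_two]
  rw [this] at h2
  nlinarith [norm_nonneg z]

theorem stmt12 (u : Fin 4 → ℂ) (hu : ∑ α : Fin 4, ‖u α‖ ^ 2 = 1) :
    (∑ α : Fin 4, ‖u α‖) ^ 2 ≤ W u := by
  unfold W
  rw [sq, Finset.sum_mul_sum]
  have hsplit : ∀ α α' : Fin 4, ‖u α‖ * ‖u α'‖ =
      (if α = α' then ‖u α‖ * ‖u α'‖ else 0) +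
      (if α ≠ α' then ‖u α‖ * ‖u α'‖ else 0) := by
    intro α α'
    by_cases h : α = α' <;> simp [h]
  calc ∑ α : Fin 4, ∑ α' : Fin 4, ‖u α‖ * ‖u α'‖
      = (∑ α : Fin 4, ∑ α' : Fin 4, if α = α' then ‖u α‖ * ‖u α'‖ else 0)
        + ∑ α : Fin 4, ∑ α' : Fin 4, (if α ≠ α' then ‖u α‖ * ‖u α'‖ else 0) := by
        rw [← Finset.sum_add_distrib]
        refine Finset.sum_congr rfl fun α _ => ?_
        rw [← Finset.sum_add_distrib]
        exact Finset.sum_congr rfl fun α' _ => hsplit α α'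
    _ = 1 + ∑ α : Fin 4, ∑ α' : Fin 4, (if α ≠ α' then ‖u α‖ * ‖u α'‖ else 0) := by
        congr 1
        rw [← hu]
        refine Finset.sum_congr rfl fun α _ => ?_
        rw [Finset.sum_ite_eq Finset.univ α (fun α' => ‖u α‖ * ‖u α'‖)]
        simp [sq]
    _ ≤ _ := by
        gcongr with α _ α' _
        split
        · rename_i h
          have : ‖u α‖ * ‖u α'‖ =
              ‖u α * (starRingEnd ℂ) (u α')‖ := by
            rw [norm_mul, Complex.norm_conj]
          rw [this]
          have := aux_abs (u α * (starRingEnd ℂ) (u α')) (u α' * (starRingEnd ℂ) (u α))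
          linarith
        · exact le_refl 0
end
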